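/- Strong direct product theorem for fair algorithms: let G^× = G_1 × ⋯ × G_k be a direct product of plain games and let A be a (T_1,…,T_k)-fair algorithm for G^×. Then the winning probability of A is at most ∏_{i=1}^k ε_{G_i}(T_i). -/

import Mathlib

open scoped ENNReal BigOperators

noncomputable section

/-- `{0,1}`-valued indicator of a proposition, in `ℝ≥0∞`. -/
def ind (p : Prop) : ℝ≥0∞ :=
  haveI := Classical.propDecidable p
  if p then 1 else 0

/-- Deterministic oracle algorithms making at most `T` queries, modeled as decision
trees of depth at most `T`: a query is an element `q : Q`, the oracle's answer to `q`
has type `Ans q`, and the final output has type `O`. -/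
inductive DT (Q : Type) (Ans : Q → Type) (O : Type) : ℕ → Type
  | ret {T : ℕ} (o : O) : DT Q Ans O T
  | query {T : ℕ} (q : Q) (cont : Ans q → DT Q Ans O T) : DT Q Ans O (T + 1)

/-- Run a decision tree against an oracle. -/
def DT.run {Q : Type} {Ans : Q → Type} {O : Type} :
    {T : ℕ} → DT Q Ans O T → ((q : Q) → Ans q) → O
  | _, DT.ret o, _ => o
  | _, DT.query q cont, f => DT.run (cont (f q)) f

/-- The number of queries satisfying `p` made along the execution path on oracle `f`. -/
def DT.countP {Q : Type} {Ans : Q → Type} {O : Type} (p : Q → Prop) :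
    {T : ℕ} → DT Q Ans O T → ((q : Q) → Ans q) → ℕ
  | _, DT.ret _, _ => 0
  | _, DT.query q cont, f =>
      (haveI := Classical.propDecidable (p q); if p q then 1 else 0)
        + DT.countP p (cont (f q)) f

/-- A (single-challenge) game: an oracle distribution `μ` over functions
`Fin M → Fin N`, a challenge distribution `π f` for each oracle `f`, and an
accepting outcome set `R f ch` for each oracle and challenge. -/
structure Game where
  M : ℕ
  N : ℕ
  hM : 0 < M
  hN : 0 < N
  Ch : Type
  chFin : Fintype Ch
  Out : Type
  μ : PMF (Fin M → Fin N)
  π : (Fin M → Fin N) → PMF Ch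
  R : (Fin M → Fin N) → Ch → Set Out

attribute [instance] Game.chFin

namespace Game

variable (G : Game)

/-- Winning probability of a deterministic `T`-query algorithm (taking the challenge
as classical input) for the game `G`. -/
def detWinProb {T : ℕ} (a : G.Ch → DT (Fin G.M) (fun _ => Fin G.N) G.Out T) : ℝ≥0∞ :=
  ∑' f : Fin G.M → Fin G.N, G.μ f * ∑' ch : G.Ch, G.π f ch * ind ((a ch).run f ∈ G.R f ch)

/-- Uniform security `ε_G(T)`: the supremum, over randomized `T`-query algorithms
(probability distributions over deterministic ones), of the winning probability. -/
def unifSec (T : ℕ) : ℝ≥0∞ :=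
  ⨆ A : PMF (G.Ch → DT (Fin G.M) (fun _ => Fin G.N) G.Out T),
    ∑' a, A a * G.detWinProb a

/-- Winning probability, in the salted game `G_K`, of a non-uniform algorithm:
a randomized `T`-query algorithm `A` receiving `S` bits of advice together with the
salt and challenge, and an advice function `adv` mapping the joint oracle to `S` bits.
The joint oracle consists of `K` i.i.d. copies `g 0, …, g (K-1)` of the oracle of `G`,
the salt `k` is uniform on `Fin K` and the challenge is drawn from `π (g k)`. -/
def saltedWinProb (K S T : ℕ)
    (A : PMF ((Fin S → Bool) × Fin K × G.Ch →
      DT (Fin K × Fin G.M) (fun _ => Fin G.N) G.Out T))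
    (adv : (Fin K → Fin G.M → Fin G.N) → Fin S → Bool) : ℝ≥0∞ :=
  ∑' g : Fin K → Fin G.M → Fin G.N,
    (∏ k, G.μ (g k)) *
      ((K : ℝ≥0∞)⁻¹ *
        ∑' k : Fin K, ∑' ch : G.Ch, G.π (g k) ch *
          ∑' a, A a *
            ind ((a (adv g, k, ch)).run (fun q => g q.1 q.2) ∈ G.R (g k) ch))

/-- Non-uniform security `ε_{G_K}(S,T)` of the salted game `G_K`: the supremum of the
winning probability over all non-uniform `(S,T)`-algorithms `(A, adv)`. -/
def saltedNonunifSec (K S T : ℕ) : ℝ≥0∞ :=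
  ⨆ (A : PMF ((Fin S → Bool) × Fin K × G.Ch →
      DT (Fin K × Fin G.M) (fun _ => Fin G.N) G.Out T))
    (adv : (Fin K → Fin G.M → Fin G.N) → Fin S → Bool),
    G.saltedWinProb K S T A adv

/-- The marginal probability of a challenge `ch` (for `f ∼ μ`, `ch ∼ π f`). -/
def chProb (ch : G.Ch) : ℝ≥0∞ := ∑' f : Fin G.M → Fin G.N, G.μ f * G.π f ch

/-- The oracle distribution `μ_ch` conditioned on the drawn challenge being `ch`. -/
def condDist (ch : G.Ch) (f : Fin G.M → Fin G.N) : ℝ≥0∞ :=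
  G.μ f * G.π f ch / G.chProb ch

/-- Uniform security `ε_{G_ch}(T)` of the challenge-conditioned plain game `G_ch`:
the supremum over randomized `T`-query algorithms of the probability, for
`f ∼ μ_ch`, that the output lies in `R f ch`. -/
def condSec (ch : G.Ch) (T : ℕ) : ℝ≥0∞ :=
  ⨆ A : PMF (DT (Fin G.M) (fun _ => Fin G.N) G.Out T),
    ∑' a, A a * ∑' f : Fin G.M → Fin G.N, G.condDist ch f * ind (a.run f ∈ G.R f ch)

/-- Uniform security `ε_{G^n}(T')` of the multi-challenge game `G^n`: `n` i.i.d.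
challenges are drawn from `π f` and the algorithm must answer all of them. -/
def multiSec (n T' : ℕ) : ℝ≥0∞ :=
  ⨆ A : PMF ((Fin n → G.Ch) → DT (Fin G.M) (fun _ => Fin G.N) (Fin n → G.Out) T'),
    ∑' a, A a * ∑' f : Fin G.M → Fin G.N, G.μ f *
      ∑' chs : Fin n → G.Ch,
        (∏ j, G.π f (chs j)) * ind (∀ j, (a chs).run f j ∈ G.R f (chs j))

end Game

/-- A plain game: a game without challenges. -/
structure PlainGame where
  M : ℕ
  N : ℕ
  hM : 0 < M
  hN : 0 < N
  Out : Type
  μ : PMF (Fin M → Fin N)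
  R : (Fin M → Fin N) → Set Out

namespace PlainGame

/-- Uniform security `ε_G(T)` of a plain game. -/
def unifSec (G : PlainGame) (T : ℕ) : ℝ≥0∞ :=
  ⨆ A : PMF (DT (Fin G.M) (fun _ => Fin G.N) G.Out T),
    ∑' a, A a * ∑' f : Fin G.M → Fin G.N, G.μ f * ind (a.run f ∈ G.R f)

end PlainGame

/-- Query domain for joint oracle access to the oracles of `k` plain games:
each query is addressed to one of the oracles. -/
abbrev ProdQ {k : ℕ} (Gs : Fin k → PlainGame) : Type := (i : Fin k) × Fin (Gs i).M

/-- Answer type for queries in the direct product. -/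
abbrev ProdAns {k : ℕ} (Gs : Fin k → PlainGame) : ProdQ Gs → Type :=
  fun q => Fin (Gs q.1).N

/-- The joint oracle `(f 0, …, f (k-1))` as a single oracle function. -/
def jointOracle {k : ℕ} {Gs : Fin k → PlainGame}
    (f : (i : Fin k) → Fin (Gs i).M → Fin (Gs i).N) : (q : ProdQ Gs) → ProdAns Gs q :=
  fun q => f q.1 q.2

/-- Winning probability of a `(T 0, …, T (k-1))`-memoryless algorithm, given by
deterministic algorithms `A i` (each making at most `T i` queries and each with
joint oracle access) run sequentially with no shared memory; the oracles are drawn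
independently, and the algorithm wins if every output `(A i).run` is accepted. -/
def memorylessWinProb {k : ℕ} (Gs : Fin k → PlainGame) {T : Fin k → ℕ}
    (A : (i : Fin k) → DT (ProdQ Gs) (ProdAns Gs) (Gs i).Out (T i)) : ℝ≥0∞ :=
  ∑' f : (i : Fin k) → Fin (Gs i).M → Fin (Gs i).N,
    (∏ i, (Gs i).μ (f i)) * ind (∀ i, (A i).run (jointOracle f) ∈ (Gs i).R (f i))

/-- Winning probability of a deterministic algorithm with joint oracle access
outputting a tuple `(e 0, …, e (k-1))` for the direct product game. -/
def jointWinProb {k : ℕ} (Gs : Fin k → PlainGame) {B : ℕ}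
    (A : DT (ProdQ Gs) (ProdAns Gs) ((i : Fin k) → (Gs i).Out) B) : ℝ≥0∞ :=
  ∑' f : (i : Fin k) → Fin (Gs i).M → Fin (Gs i).N,
    (∏ i, (Gs i).μ (f i)) * ind (∀ i, A.run (jointOracle f) i ∈ (Gs i).R (f i))

/-- A deterministic algorithm is `(T 0, …, T (k-1))`-fair if in every execution it
makes at most `T i` queries to the `i`-th oracle. -/
def IsFair {k : ℕ} {Gs : Fin k → PlainGame} {O : Type} {B : ℕ} (T : Fin k → ℕ)
    (A : DT (ProdQ Gs) (ProdAns Gs) O B) : Prop :=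
  ∀ (f : (i : Fin k) → Fin (Gs i).M → Fin (Gs i).N) (i : Fin k),
    A.countP (fun q => q.1 = i) (jointOracle f) ≤ T i

end


section SDPTProof

open Finset

lemma ind_of {p : Prop} (h : p) : ind p = 1 := by simp [ind, h]

lemma ind_of_not {p : Prop} (h : ¬ p) : ind p = 0 := by simp [ind, h]

lemma of_ind_ne_zero {p : Prop} (h : ind p ≠ 0) : p := by
  by_contra hp; exact h (ind_of_not hp)

lemma ind_forall {ι : Type} [Fintype ι] (p : ι → Prop) :
    ind (∀ i, p i) = ∏ i, ind (p i) := by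
  by_cases h : ∀ i, p i
  · rw [ind_of h]; exact (Finset.prod_eq_one fun i _ => ind_of (h i)).symm
  · rw [ind_of_not h]
    push_neg at h
    obtain ⟨i, hi⟩ := h
    exact (Finset.prod_eq_zero (Finset.mem_univ i) (ind_of_not hi)).symm

lemma sum_iSup_le {ι κ : Type} [Fintype ι] [DecidableEq ι] [Nonempty κ]
    (v : ι → κ → ℝ≥0∞) {C : ℝ≥0∞} (h : ∀ c : ι → κ, ∑ i, v i (c i) ≤ C) :
    ∑ i, ⨆ t, v i t ≤ C := by
  have key : ∀ s : Finset ι, ∑ i ∈ s, ⨆ t, v i t ≤ ⨆ c : ι → κ, ∑ i ∈ s, v i (c i) := by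
    intro s
    induction s using Finset.induction_on with
    | empty => simp
    | @insert a s ha ih =>
      rw [Finset.sum_insert ha]
      refine le_trans (add_le_add_right ih _) ?_
      rw [ENNReal.iSup_add]
      refine iSup_le fun t => ?_
      rw [ENNReal.add_iSup]
      refine iSup_le fun c => ?_
      refine le_trans (le_of_eq ?_) (le_iSup _ (Function.update c a t))
      rw [Finset.sum_insert ha, Function.update_self]
      congr 1
      exact Finset.sum_congr rfl fun i hi =>
        (congrArg _ (Function.update_of_ne (ne_of_mem_of_not_mem hi ha) _ _)).symm
  exact le_trans (key Finset.univ) (iSup_le h)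

/-- Value of the best deterministic `T`-query algorithm against weights `ν`. -/
noncomputable def secVal (G : PlainGame) (ν : (Fin G.M → Fin G.N) → ℝ≥0∞) (T : ℕ) : ℝ≥0∞ :=
  ⨆ a : DT (Fin G.M) (fun _ => Fin G.N) G.Out T,
    ∑ f : Fin G.M → Fin G.N, ν f * ind (a.run f ∈ G.R f)

lemma absorb (G : PlainGame) [Nonempty G.Out]
    (ν : (Fin G.M → Fin G.N) → ℝ≥0∞) (q : Fin G.M) (T : ℕ) :
    ∑ a : Fin G.N, secVal G (fun g => ν g * ind (g q = a)) T ≤ secVal G ν (T + 1) := by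
  haveI : Nonempty (DT (Fin G.M) (fun _ => Fin G.N) G.Out T) :=
    ⟨DT.ret (Classical.arbitrary _)⟩
  unfold secVal
  refine sum_iSup_le _ fun c => ?_
  have step : ∑ a : Fin G.N, ∑ f : Fin G.M → Fin G.N,
        (ν f * ind (f q = a)) * ind ((c a).run f ∈ G.R f)
      = ∑ f : Fin G.M → Fin G.N, ν f * ind ((DT.query q c).run f ∈ G.R f) := by
    rw [Finset.sum_comm]
    refine Finset.sum_congr rfl fun g _ => ?_
    rw [Finset.sum_eq_single (g q)]
    · rw [ind_of rfl, mul_one]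
      rfl
    · intro a _ hne
      rw [ind_of_not (fun hh => hne hh.symm), mul_zero, zero_mul]
    · exact fun h => absurd (Finset.mem_univ _) h
  rw [step]
  exact le_iSup (fun t : DT (Fin G.M) (fun _ => Fin G.N) G.Out (T + 1) =>
    ∑ f : Fin G.M → Fin G.N, ν f * ind (t.run f ∈ G.R f)) (DT.query q c)

lemma main_lemma {k : ℕ} (Gs : Fin k → PlainGame) :
    ∀ {B : ℕ} (A : DT (ProdQ Gs) (ProdAns Gs) ((i : Fin k) → (Gs i).Out) B)
      (ν : ∀ i, (Fin (Gs i).M → Fin (Gs i).N) → ℝ≥0∞) (T : Fin k → ℕ),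
      (∀ f, (∏ i, ν i (f i)) ≠ 0 →
        ∀ i, A.countP (fun q => q.1 = i) (jointOracle f) ≤ T i) →
      ∑ f : ∀ i, Fin (Gs i).M → Fin (Gs i).N,
        (∏ i, ν i (f i)) * ind (∀ i, A.run (jointOracle f) i ∈ (Gs i).R (f i))
        ≤ ∏ i, secVal (Gs i) (ν i) (T i) := by
  intro B A
  induction A with
  | ret o =>
    intro ν T _
    simp only [DT.run]
    calc ∑ f : ∀ i, Fin (Gs i).M → Fin (Gs i).N,
          (∏ i, ν i (f i)) * ind (∀ i, o i ∈ (Gs i).R (f i))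
        = ∑ f : ∀ i, Fin (Gs i).M → Fin (Gs i).N,
            ∏ i, (ν i (f i) * ind (o i ∈ (Gs i).R (f i))) := by
          refine Finset.sum_congr rfl fun f _ => ?_
          rw [ind_forall, Finset.prod_mul_distrib]
      _ = ∏ i, ∑ g : Fin (Gs i).M → Fin (Gs i).N, ν i g * ind (o i ∈ (Gs i).R g) := by
          rw [Finset.prod_univ_sum, Fintype.piFinset_univ]
      _ ≤ ∏ i, secVal (Gs i) (ν i) (T i) := by
          refine Finset.prod_le_prod' fun i _ => ?_
          exact le_iSup (fun a : DT (Fin (Gs i).M) (fun _ => Fin (Gs i).N) (Gs i).Out (T i) =>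
            ∑ g : Fin (Gs i).M → Fin (Gs i).N, ν i g * ind (a.run g ∈ (Gs i).R g))
            (DT.ret (o i))
  | @query B q cont ih =>
    obtain ⟨i₀, q0⟩ := q
    intro ν T hf
    by_cases hz : ∀ f : ∀ i, Fin (Gs i).M → Fin (Gs i).N, (∏ i, ν i (f i)) = 0
    · refine le_trans (le_of_eq (Finset.sum_eq_zero fun f _ => ?_)) zero_le
      rw [hz f, zero_mul]
    push_neg at hz
    obtain ⟨f₀, hf₀⟩ := hz
    have hcount := hf f₀ hf₀ i₀
    simp only [DT.countP, if_true] at hcount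
    have hT1 : 1 ≤ T i₀ := le_trans (Nat.le_add_right 1 _) hcount
    set T' : Fin k → ℕ := Function.update T i₀ (T i₀ - 1) with hT'
    set ν' : Fin (Gs i₀).N → ∀ i, (Fin (Gs i).M → Fin (Gs i).N) → ℝ≥0∞ :=
      fun a => Function.update ν i₀ (fun g => ν i₀ g * ind (g q0 = a)) with hν'
    have f₁ : ∀ i, Fin (Gs i).M → Fin (Gs i).N := fun i _ => ⟨0, (Gs i).hN⟩
    haveI hNE : Nonempty ((Gs i₀).Out) := ⟨(cont (f₁ i₀ q0)).run (jointOracle f₁) i₀⟩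
    have key : ∀ f : ∀ i, Fin (Gs i).M → Fin (Gs i).N,
        (∏ i, ν i (f i)) *
          ind (∀ i, (cont (f i₀ q0)).run (jointOracle f) i ∈ (Gs i).R (f i))
        = ∑ a : Fin (Gs i₀).N, (∏ i, ν' a i (f i)) *
            ind (∀ i, (cont a).run (jointOracle f) i ∈ (Gs i).R (f i)) := by
      intro f
      rw [Finset.sum_eq_single (f i₀ q0)]
      · congr 1
        refine Finset.prod_congr rfl fun i _ => ?_
        by_cases hi : i = i₀
        · subst hi
          simp only [hν', Function.update_self]
          rw [ind_of trivial, mul_one]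
        · simp [hν', Function.update_of_ne hi]
      · intro a _ hne
        have h0 : ν' a i₀ (f i₀) = 0 := by
          simp only [hν', Function.update_self]
          rw [ind_of_not (fun hh => hne hh.symm), mul_zero]
        rw [Finset.prod_eq_zero (Finset.mem_univ i₀) h0, zero_mul]
      · exact fun h => absurd (Finset.mem_univ _) h
    have fair' : ∀ a : Fin (Gs i₀).N, ∀ f : ∀ i, Fin (Gs i).M → Fin (Gs i).N,
        (∏ i, ν' a i (f i)) ≠ 0 → ∀ i,
        (cont a).countP (fun q => q.1 = i) (jointOracle f) ≤ T' i := by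
      intro a f hfne i
      have h0 : ∀ j, ν' a j (f j) ≠ 0 :=
        fun j h => hfne (Finset.prod_eq_zero (Finset.mem_univ j) h)
      have hi₀ := h0 i₀
      simp only [hν', Function.update_self] at hi₀
      have hmul := mul_ne_zero_iff.mp hi₀
      have ha : f i₀ q0 = a := of_ind_ne_zero hmul.2
      have hν0 : (∏ i, ν i (f i)) ≠ 0 := by
        rw [Finset.prod_ne_zero_iff]
        intro j _
        by_cases hj : j = i₀
        · subst hj; exact hmul.1
        · have := h0 j
          simpa only [hν', Function.update_of_ne hj] using this
      have hc := hf f hν0 i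
      simp only [DT.countP, jointOracle] at hc
      rw [ha] at hc
      by_cases hii : i = i₀
      · subst hii
        rw [hT', Function.update_self]
        rw [if_pos rfl] at hc
        omega
      · rw [hT', Function.update_of_ne hii]
        rw [if_neg (fun he : i₀ = i => hii he.symm)] at hc
        omega
    calc ∑ f : ∀ i, Fin (Gs i).M → Fin (Gs i).N,
          (∏ i, ν i (f i)) *
            ind (∀ i, (DT.query ⟨i₀, q0⟩ cont).run (jointOracle f) i ∈ (Gs i).R (f i))
        = ∑ a : Fin (Gs i₀).N, ∑ f : ∀ i, Fin (Gs i).M → Fin (Gs i).N,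
            (∏ i, ν' a i (f i)) *
              ind (∀ i, (cont a).run (jointOracle f) i ∈ (Gs i).R (f i)) := by
          rw [Finset.sum_comm]
          exact Finset.sum_congr rfl fun f _ => key f
      _ ≤ ∑ a : Fin (Gs i₀).N, ∏ i, secVal (Gs i) (ν' a i) (T' i) :=
          Finset.sum_le_sum fun a _ => ih a (ν' a) T' (fair' a)
      _ = (∑ a : Fin (Gs i₀).N,
              secVal (Gs i₀) (fun g => ν i₀ g * ind (g q0 = a)) (T i₀ - 1)) *
            ∏ i ∈ Finset.univ.erase i₀, secVal (Gs i) (ν i) (T i) := by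
          rw [Finset.sum_mul]
          refine Finset.sum_congr rfl fun a _ => ?_
          rw [← Finset.mul_prod_erase Finset.univ _ (Finset.mem_univ i₀)]
          congr 1
          · simp only [hν', hT', Function.update_self]
          · refine Finset.prod_congr rfl fun i hi => ?_
            have hne : i ≠ i₀ := (Finset.mem_erase.mp hi).1
            simp only [hν', hT', Function.update_of_ne hne]
      _ ≤ secVal (Gs i₀) (ν i₀) ((T i₀ - 1) + 1) *
            ∏ i ∈ Finset.univ.erase i₀, secVal (Gs i) (ν i) (T i) :=
          mul_le_mul_left (absorb (Gs i₀) (ν i₀) q0 (T i₀ - 1)) _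
      _ = ∏ i, secVal (Gs i) (ν i) (T i) := by
          rw [Nat.sub_add_cancel hT1]
          exact Finset.mul_prod_erase Finset.univ
            (fun i => secVal (Gs i) (ν i) (T i)) (Finset.mem_univ i₀)

lemma secVal_le_unifSec (G : PlainGame) (T : ℕ) :
    secVal G G.μ T ≤ G.unifSec T := by
  refine iSup_le fun a => ?_
  have : (∑ f : Fin G.M → Fin G.N, G.μ f * ind (a.run f ∈ G.R f))
      = ∑' a' : DT (Fin G.M) (fun _ => Fin G.N) G.Out T, (PMF.pure a) a' *
          ∑' f : Fin G.M → Fin G.N, G.μ f * ind (a'.run f ∈ G.R f) := by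
    rw [tsum_eq_single a (fun b hb => by rw [PMF.pure_apply_of_ne _ _ hb, zero_mul])]
    rw [PMF.pure_apply_self, one_mul, tsum_fintype]
  rw [this]
  exact le_iSup (fun A : PMF (DT (Fin G.M) (fun _ => Fin G.N) G.Out T) =>
    ∑' a', A a' * ∑' f : Fin G.M → Fin G.N, G.μ f * ind (a'.run f ∈ G.R f))
    (PMF.pure a)

end SDPTProof

/-- Strong direct product theorem for fair algorithms:
a `(T 0, …, T (k-1))`-fair algorithm for the direct product `G 0 × ⋯ × G (k-1)`
wins with probability at most `∏ i, ε_{G i}(T i)`. -/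
theorem fair_sdpt {k : ℕ} (Gs : Fin k → PlainGame) (T : Fin k → ℕ) {B : ℕ}
    (A : DT (ProdQ Gs) (ProdAns Gs) ((i : Fin k) → (Gs i).Out) B)
    (hfair : IsFair T A) :
    jointWinProb Gs A ≤ ∏ i, (Gs i).unifSec (T i) := by
  have h1 : jointWinProb Gs A = ∑ f : ∀ i, Fin (Gs i).M → Fin (Gs i).N,
      (∏ i, (Gs i).μ (f i)) * ind (∀ i, A.run (jointOracle f) i ∈ (Gs i).R (f i)) :=
    tsum_fintype _
  rw [h1]
  refine le_trans (main_lemma Gs A (fun i => (Gs i).μ) T (fun f _ i => hfair f i)) ?_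
  exact Finset.prod_le_prod' fun i _ => secVal_le_unifSec (Gs i) (T i)
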